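/- In the algebra A_n^m, suppose the nilpotent basis vectors multiply trivially: I_s I_p = 0 for all s,p ∈ {m+1,...,n}. Then for ζ = x e_1 + y e_2 + z e_3 and t ∈ ℂ with t ≠ ξ_u for all u ≤ m, the resolvent has the closed form (t e_1 − ζ)^{-1} = Σ_{u=1}^m I_u/(t − ξ_u) + Σ_{s=m+1}^n T_s I_s/(t − ξ_{u_s})², where T_s = y a_s + z b_s. -/

import Mathlib

/-- When the nilpotent basis vectors multiply trivially, the resolvent has the
closed form
`(t e₁ − ζ)⁻¹ = Σ_{u=1}^m I_u/(t − ξ_u) + Σ_{s=m+1}^n T_s I_s/(t − ξ_{u_s})²`. -/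
theorem resolvent_closed_form (n m : ℕ) (hm : m ≤ n) (A : Type*)
    [CommRing A] [Algebra ℂ A]
    (I : Module.Basis (Fin n) ℂ A)
    (hidem : ∀ r s : Fin n, r.val < m → s.val < m →
      I r * I s = if r = s then I r else 0)
    (u : Fin n → Fin n)
    (hu : ∀ s : Fin n, m ≤ s.val → (u s).val < m)
    (hmul3 : ∀ s : Fin n, m ≤ s.val → ∀ r : Fin n, r.val < m →
      I r * I s = if r = u s then I s else 0)
    -- trivial multiplication on the radical
    (hrad : ∀ s p : Fin n, m ≤ s.val → m ≤ p.val → I s * I p = 0)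
    (hone : ∑ w ∈ Finset.univ.filter (fun w : Fin n => w.val < m), I w = 1)
    (a b : Fin n → ℂ) (x y z : ℝ) (e₂ e₃ ζ : A)
    (he₂ : e₂ = ∑ r, a r • I r) (he₃ : e₃ = ∑ r, b r • I r)
    (hζ : ζ = (x : ℂ) • (1 : A) + (y : ℂ) • e₂ + (z : ℂ) • e₃)
    (ξ : Fin n → ℂ) (hξ : ∀ w, ξ w = (x : ℂ) + (y : ℂ) * a w + (z : ℂ) * b w)
    (T : Fin n → ℂ) (hT : ∀ p, T p = (y : ℂ) * a p + (z : ℂ) * b p)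
    (t : ℂ) (ht : ∀ w : Fin n, w.val < m → t ≠ ξ w) :
    IsUnit (algebraMap ℂ A t - ζ)
      ∧ Ring.inverse (algebraMap ℂ A t - ζ)
        = (∑ w ∈ Finset.univ.filter (fun w : Fin n => w.val < m), (t - ξ w)⁻¹ • I w)
          + ∑ s ∈ Finset.univ.filter (fun s : Fin n => m ≤ s.val),
              (T s / (t - ξ (u s)) ^ 2) • I s := by
  classical
  set F := Finset.univ.filter (fun w : Fin n => w.val < m) with hF
  set G := Finset.univ.filter (fun s : Fin n => m ≤ s.val) with hG
  have hmemF : ∀ w : Fin n, w ∈ F ↔ w.val < m := by intro w; simp [hF]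
  have hmemG : ∀ w : Fin n, w ∈ G ↔ m ≤ w.val := by intro w; simp [hG]
  have hnez : ∀ w : Fin n, w.val < m → t - ξ w ≠ 0 := fun w hw =>
    sub_ne_zero.mpr (ht w hw)
  have hsplit : ∀ f : Fin n → A, (∑ r, f r) = ∑ w ∈ F, f w + ∑ s ∈ G, f s := by
    intro f
    rw [← Finset.sum_filter_add_sum_filter_not Finset.univ (fun w : Fin n => w.val < m) f]
    congr 1
    apply Finset.sum_congr _ (fun _ _ => rfl)
    rw [hG]; ext w; simp [not_lt]
  set R : A := (∑ w ∈ F, (t - ξ w)⁻¹ • I w)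
      + ∑ s ∈ G, (T s / (t - ξ (u s)) ^ 2) • I s with hR
  have hM : algebraMap ℂ A t - ζ
      = ∑ w ∈ F, (t - ξ w) • I w + ∑ s ∈ G, (-(T s)) • I s := by
    rw [hζ, he₂, he₃, Algebra.algebraMap_eq_smul_one, ← hone]
    rw [hsplit (fun r => a r • I r), hsplit (fun r => b r • I r)]
    simp only [hξ, hT, smul_add, Finset.smul_sum, smul_smul, sub_smul, add_smul,
      neg_smul, neg_add, Finset.sum_neg_distrib, Finset.sum_add_distrib, Finset.sum_sub_distrib]
    abel
  have key : (algebraMap ℂ A t - ζ) * R = 1 := by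
    rw [hM, hR, add_mul, mul_add, mul_add, Finset.sum_mul_sum, Finset.sum_mul_sum,
      Finset.sum_mul_sum, Finset.sum_mul_sum]
    have hFF : ∑ w ∈ F, ∑ v ∈ F, ((t - ξ w) • I w) * ((t - ξ v)⁻¹ • I v) = 1 := by
      rw [← hone]
      apply Finset.sum_congr rfl
      intro w hw
      rw [Finset.sum_eq_single w]
      · rw [smul_mul_smul_comm, hidem w w ((hmemF w).1 hw) ((hmemF w).1 hw), if_pos rfl,
          mul_inv_cancel₀ (hnez w ((hmemF w).1 hw)), one_smul]
      · intro v hv hne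
        rw [smul_mul_smul_comm, hidem w v ((hmemF w).1 hw) ((hmemF v).1 hv),
          if_neg (fun h => hne h.symm), smul_zero]
      · intro h; exact absurd hw h
    have hFG : ∑ w ∈ F, ∑ s ∈ G, ((t - ξ w) • I w) * ((T s / (t - ξ (u s)) ^ 2) • I s)
        = ∑ s ∈ G, ((t - ξ (u s)) * (T s / (t - ξ (u s)) ^ 2)) • I s := by
      rw [Finset.sum_comm]
      apply Finset.sum_congr rfl
      intro s hs
      have hsG := (hmemG s).1 hs
      rw [Finset.sum_eq_single (u s)]
      · rw [smul_mul_smul_comm, hmul3 s hsG (u s) (hu s hsG), if_pos rfl]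
      · intro v hv hne
        rw [smul_mul_smul_comm, hmul3 s hsG v ((hmemF v).1 hv), if_neg hne, smul_zero]
      · intro h; exact absurd ((hmemF (u s)).2 (hu s hsG)) h
    have hGF : ∑ s ∈ G, ∑ w ∈ F, ((-(T s)) • I s) * ((t - ξ w)⁻¹ • I w)
        = ∑ s ∈ G, ((-(T s)) * (t - ξ (u s))⁻¹) • I s := by
      apply Finset.sum_congr rfl
      intro s hs
      have hsG := (hmemG s).1 hs
      rw [Finset.sum_eq_single (u s)]
      · rw [smul_mul_smul_comm, mul_comm (I s), hmul3 s hsG (u s) (hu s hsG), if_pos rfl]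
      · intro v hv hne
        rw [smul_mul_smul_comm, mul_comm (I s), hmul3 s hsG v ((hmemF v).1 hv),
          if_neg hne, smul_zero]
      · intro h; exact absurd ((hmemF (u s)).2 (hu s hsG)) h
    have hGG : ∑ s ∈ G, ∑ p ∈ G, ((-(T s)) • I s) * ((T p / (t - ξ (u p)) ^ 2) • I p) = 0 := by
      apply Finset.sum_eq_zero
      intro s hs
      apply Finset.sum_eq_zero
      intro p hp
      rw [smul_mul_smul_comm, hrad s p ((hmemG s).1 hs) ((hmemG p).1 hp), smul_zero]
    rw [hFF, hFG, hGF, hGG, add_zero, add_assoc, ← Finset.sum_add_distrib]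
    have : ∑ s ∈ G, (((t - ξ (u s)) * (T s / (t - ξ (u s)) ^ 2)) • I s
        + ((-(T s)) * (t - ξ (u s))⁻¹) • I s) = 0 := by
      apply Finset.sum_eq_zero
      intro s hs
      rw [← add_smul]
      have hz : (t - ξ (u s)) * (T s / (t - ξ (u s)) ^ 2)
          + (-(T s)) * (t - ξ (u s))⁻¹ = 0 := by
        have h0 := hnez (u s) (hu s ((hmemG s).1 hs))
        field_simp
        ring
      rw [hz, zero_smul]
    rw [this, add_zero]
  have hunit : IsUnit (algebraMap ℂ A t - ζ) := IsUnit.of_mul_eq_one _ key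
  refine ⟨hunit, ?_⟩
  have : Ring.inverse (algebraMap ℂ A t - ζ) * ((algebraMap ℂ A t - ζ) * R)
      = Ring.inverse (algebraMap ℂ A t - ζ) := by rw [key, mul_one]
  rw [← mul_assoc, Ring.inverse_mul_cancel _ hunit, one_mul] at this
  rw [← this, hR]
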